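/- For fixed α⁻, the best response of a player in the social distancing game is either ã or g*(α⁻) (or a mixture of the two when they give equal utility): if g*(α⁻) ≤ ã then g*(α⁻) is the unique maximizer of u(·, α⁻) on (0,1]; if g*(α⁻) > ã then the maximum of u(·, α⁻) over (0,1] is max{u(ã, α⁻), u(g*(α⁻), α⁻)}. -/

import Mathlib

/-- for fixed α⁻, the best response is either ã or g*(α⁻): if
g*(α⁻) ≤ ã then g*(α⁻) is the unique maximizer of u(·, α⁻) on (0,1]; if
g*(α⁻) > ã then the maximum of u(·, α⁻) over (0,1] is
max{u(ã, α⁻), u(g*(α⁻), α⁻)}. -/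
theorem best_response_characterization (s i r a k atil c : ℝ) (hs : 0 ≤ s)
    (hi : 0 < i) (hr : 0 < r) (ha : 0 < a) (ha1 : a ≤ 1) (hk : 0 < k) (hc : 0 < c)
    (hat : atil ∈ Set.Ioo (0:ℝ) 1) (am : ℝ) (ham : am ∈ Set.Ioc (0:ℝ) 1)
    (G gstar : ℝ → ℝ)
    (hG : ∀ α, G α = k * α * i / (α * s + α * i + a * r))
    (hgstar : ∀ α, gstar α = 1 / (1 + G α))
    (u : ℝ → ℝ → ℝ)
    (hu : ∀ α b, u α b =
      Real.log α - α + 1 - (if atil < α then c else 0) - α * G b) :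
    (gstar am ≤ atil →
      ∀ α ∈ Set.Ioc (0:ℝ) 1, α ≠ gstar am → u α am < u (gstar am) am) ∧
    (atil < gstar am →
      ∀ α ∈ Set.Ioc (0:ℝ) 1, u α am ≤ max (u atil am) (u (gstar am) am)) := by
  have hden : 0 < am * s + am * i + a * r := by
    have h1 : 0 ≤ am * s := mul_nonneg ham.1.le hs
    have h2 : 0 < am * i := mul_pos ham.1 hi
    have h3 : 0 < a * r := mul_pos ha hr
    linarith
  have hGm : 0 < G am := by
    rw [hG]
    exact div_pos (mul_pos (mul_pos hk ham.1) hi) hden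
  set Gm := G am with hGmdef
  have hg : gstar am = 1 / (1 + Gm) := hgstar am
  have h1G : 0 < 1 + Gm := by linarith
  have hgpos : 0 < gstar am := by rw [hg]; positivity
  -- smooth part
  set f : ℝ → ℝ := fun α => Real.log α - α + 1 - α * Gm with hf
  -- Claim A: f α < f (gstar am) for α ≠ gstar am, α > 0
  have claimA : ∀ α : ℝ, 0 < α → α ≠ gstar am → f α < f (gstar am) := by
    intro α hα hne
    have hratio : α / gstar am ≠ 1 := by
      intro h
      exact hne (by field_simp at h; linarith)
    have hlog : Real.log (α / gstar am) < α / gstar am - 1 :=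
      Real.log_lt_sub_one_of_pos (div_pos hα hgpos) hratio
    rw [Real.log_div (ne_of_gt hα) (ne_of_gt hgpos)] at hlog
    have hsub : α / gstar am - 1 = (α - gstar am) * (1 + Gm) := by
      rw [hg]; field_simp
    rw [hsub] at hlog
    simp only [hf]
    nlinarith
  -- Claim B: f is monotone below gstar
  have claimB : atil < gstar am → ∀ α : ℝ, 0 < α → α ≤ atil → f α ≤ f atil := by
    intro hlt α hα hle
    have hatpos : 0 < atil := hat.1
    have hratio : 0 < α / atil := div_pos hα hatpos
    have hlog : Real.log (α / atil) ≤ α / atil - 1 :=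
      Real.log_le_sub_one_of_pos hratio
    rw [Real.log_div (ne_of_gt hα) (ne_of_gt hatpos)] at hlog
    -- so log atil - log α ≥ 1 - α/atil = (atil - α)/atil ≥ (atil - α)(1+Gm)
    have hinv : 1 + Gm ≤ 1 / atil := by
      rw [hg] at hlt
      rw [le_div_iff₀ hatpos]
      rw [lt_div_iff₀ h1G] at hlt
      linarith
    have h2 : (atil - α) * (1 + Gm) ≤ (atil - α) / atil := by
      rw [div_eq_mul_inv, ← one_div]
      exact mul_le_mul_of_nonneg_left hinv (by linarith)
    have h3 : Real.log atil - Real.log α ≥ (atil - α) / atil := by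
      have : α / atil - 1 = -((atil - α) / atil) := by field_simp; ring
      rw [this] at hlog
      linarith
    simp only [hf]
    nlinarith
  constructor
  · intro hle α hα hne
    have huα := hu α am
    have hug := hu (gstar am) am
    have hind : (if atil < gstar am then c else 0) = 0 := by
      rw [if_neg (not_lt.mpr hle)]
    have hfA := claimA α hα.1 hne
    simp only [hf] at hfA
    rw [huα, hug, hind]
    have hind2 : (0:ℝ) ≤ (if atil < α then c else 0) := by
      split <;> linarith
    linarith
  · intro hlt α hα
    by_cases hcase : α ≤ atil
    · -- u α am = f α ≤ f atil = u atil am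
      have hfB := claimB hlt α hα.1 hcase
      simp only [hf] at hfB
      have huα := hu α am
      have huat := hu atil am
      rw [if_neg (not_lt.mpr hcase)] at huα
      rw [if_neg (lt_irrefl atil)] at huat
      have : u α am ≤ u atil am := by rw [huα, huat]; linarith
      exact le_trans this (le_max_left _ _)
    · push_neg at hcase
      have huα := hu α am
      have hug := hu (gstar am) am
      rw [if_pos hcase] at huα
      rw [if_pos hlt] at hug
      have hfle : f α ≤ f (gstar am) := by
        by_cases hne : α = gstar am
        · rw [hne]
        · exact (claimA α hα.1 hne).le
      simp only [hf] at hfle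
      have : u α am ≤ u (gstar am) am := by rw [huα, hug]; linarith
      exact le_trans this (le_max_right _ _)
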